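/- Let λ ∈ ℂ and ν ∈ ℕ, and define the array-type polynomials S(x;n,ν;λ) by the EGF ((λe^t - 1)^ν/ν!) e^{xt} = Σ_{n≥0} S(x;n,ν;λ) t^n/n!. Then the explicit formula for the negative-order unified Apostol-type truncated exponential-Gould-Hopper polynomials holds: _{eH}P_{n-kα,β}^{(-α,m,r)}(x,y,z;k,a,b) = ((n-kα)! α! a^{bα} / 2^{(1-k)α}) Σ_{p=0}^{⌊n/m⌋} Σ_{s=0}^{⌊n/r⌋ } S(x; n-rs-mp, α; (β/a)^b) y^p z^s / ((n-rs-mp)! p!), where the sum extends over indices with n - rs - mp ≥ 0. -/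

import Mathlib

open scoped BigOperators

/-- The exponential series `e^{ct}` in `ℂ[[t]]`. -/
noncomputable def expC (c : ℂ) : PowerSeries ℂ :=
  PowerSeries.mk fun n => c ^ n / n.factorial

/-- The series `e^{y t^m} = ∑_k y^k t^{mk}/k!` in `ℂ[[t]]`. -/
noncomputable def expMonC (y : ℂ) (m : ℕ) : PowerSeries ℂ :=
  PowerSeries.mk fun n => if m ∣ n then y ^ (n / m) / (n / m).factorial else 0

section Helpers

open PowerSeries Finset

lemma expC_eq (c : ℂ) : expC c = rescale c (exp ℂ) := by
  ext n
  simp [expC, coeff_rescale, coeff_exp]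
  ring

lemma expC_mul (c d : ℂ) : expC c * expC d = expC (c + d) := by
  rw [expC_eq, expC_eq, expC_eq, exp_mul_exp_eq_exp_add]

lemma expC_pow (c : ℂ) (j : ℕ) : (expC c) ^ j = expC (j * c) := by
  induction j with
  | zero =>
      ext v
      rcases v with _ | v <;> simp [expC, PowerSeries.coeff_one]
  | succ i ih =>
      rw [pow_succ, ih, expC_mul]
      push_cast; ring_nf

lemma coeff_expC (c : ℂ) (v : ℕ) : PowerSeries.coeff (R := ℂ) v (expC c) = c ^ v / v.factorial := by
  simp [expC]

noncomputable def Zgeo (z : ℂ) (r : ℕ) : PowerSeries ℂ :=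
  PowerSeries.mk fun n => if r ∣ n then z ^ (n / r) else 0

lemma coeff_Zgeo (z : ℂ) (r N : ℕ) :
    PowerSeries.coeff (R := ℂ) N (Zgeo z r) = if r ∣ N then z ^ (N / r) else 0 := by
  simp [Zgeo]

lemma Zgeo_mul (z : ℂ) (r : ℕ) (hr : 1 ≤ r) :
    (1 - PowerSeries.C (R := ℂ) z * PowerSeries.X ^ r) * Zgeo z r = 1 := by
  have hr0 : 0 < r := hr
  ext N
  rw [sub_mul, one_mul, map_sub]
  rw [mul_comm (PowerSeries.C (R := ℂ) z) (PowerSeries.X ^ r), mul_assoc]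
  rw [show (PowerSeries.X ^ r * (PowerSeries.C (R := ℂ) z * Zgeo z r)) =
    (PowerSeries.C (R := ℂ) z * Zgeo z r) * PowerSeries.X ^ r from mul_comm _ _]
  rw [PowerSeries.coeff_mul_X_pow', coeff_Zgeo, PowerSeries.coeff_one]
  rcases Nat.eq_zero_or_pos N with rfl | hN
  · simp [Nat.le_zero, hr0.ne']
  · rw [if_neg hN.ne']
    by_cases hdvd : r ∣ N
    · obtain ⟨t, rfl⟩ := hdvd
      have ht : 1 ≤ t := by
        rcases Nat.eq_zero_or_pos t with rfl | h
        · simp at hN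
        · exact h
      have hle : r ≤ r * t := Nat.le_mul_of_pos_right r ht
      have hsub : r * t - r = r * (t - 1) := by
        cases t with
        | zero => omega
        | succ t' => simp [Nat.mul_succ]
      have h1 : r * t / r = t := Nat.mul_div_cancel_left t hr0
      have h2 : (r * t - r) / r = t - 1 := by
        rw [hsub]; exact Nat.mul_div_cancel_left _ hr0
      rw [if_pos ⟨t, rfl⟩, if_pos hle, PowerSeries.coeff_C_mul, coeff_Zgeo,
        if_pos (hsub ▸ dvd_mul_right r (t - 1)), h1, h2]
      rw [show t = t - 1 + 1 by omega, pow_succ]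
      ring_nf
      simp
    · rw [if_neg hdvd]
      by_cases hle : r ≤ N
      · rw [if_pos hle, PowerSeries.coeff_C_mul, coeff_Zgeo, if_neg, mul_zero, zero_sub, neg_zero]
        intro ⟨t, ht⟩
        exact hdvd ⟨t + 1, by rw [Nat.mul_succ]; omega⟩
      · rw [if_neg hle]; ring

lemma sum_dvd_reindex (r n : ℕ) (hr : 1 ≤ r) (g : ℕ → ℂ) :
    ∑ i ∈ Finset.range (n + 1), (if r ∣ i then g i else 0)
      = ∑ s ∈ Finset.range (n / r + 1), g (r * s) := by
  rw [← Finset.sum_filter]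
  apply Finset.sum_nbij' (i := fun i => i / r) (j := fun s => r * s)
  · intro i hi
    simp only [Finset.mem_filter, Finset.mem_range] at hi
    simp only [Finset.mem_range]
    have := Nat.div_le_div_right (c := r) (Nat.lt_succ_iff.mp hi.1)
    omega
  · intro s hs
    simp only [Finset.mem_range] at hs
    simp only [Finset.mem_filter, Finset.mem_range]
    refine ⟨?_, Dvd.intro s rfl⟩
    have h1 : s * r ≤ n := (Nat.le_div_iff_mul_le hr).mp (Nat.lt_succ_iff.mp hs)
    have h2 : r * s = s * r := mul_comm r s
    omega
  · intro i hi
    simp only [Finset.mem_filter] at hi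
    exact Nat.mul_div_cancel' hi.2
  · intro s hs
    exact Nat.mul_div_cancel_left s hr
  · intro i hi
    simp only [Finset.mem_filter] at hi
    rw [Nat.mul_div_cancel' hi.2]

lemma coeff_Zgeo_mul (z : ℂ) (r : ℕ) (hr : 1 ≤ r) (F : PowerSeries ℂ) (n : ℕ) :
    PowerSeries.coeff (R := ℂ) n (Zgeo z r * F)
      = ∑ s ∈ Finset.range (n / r + 1), z ^ s * PowerSeries.coeff (R := ℂ) (n - r * s) F := by
  rw [PowerSeries.coeff_mul, Finset.Nat.sum_antidiagonal_eq_sum_range_succ_mk]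
  simp only [coeff_Zgeo, ite_mul, zero_mul]
  rw [sum_dvd_reindex r n hr (fun i => z ^ (i / r) * PowerSeries.coeff (R := ℂ) (n - i) F)]
  refine Finset.sum_congr rfl fun s _ => ?_
  rw [Nat.mul_div_cancel_left s hr]

lemma coeff_expMonC_mul (y : ℂ) (m : ℕ) (hm : 1 ≤ m) (F : PowerSeries ℂ) (n : ℕ) :
    PowerSeries.coeff (R := ℂ) n (expMonC y m * F)
      = ∑ p ∈ Finset.range (n / m + 1),
          y ^ p / p.factorial * PowerSeries.coeff (R := ℂ) (n - m * p) F := by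
  rw [PowerSeries.coeff_mul, Finset.Nat.sum_antidiagonal_eq_sum_range_succ_mk]
  simp only [expMonC, PowerSeries.coeff_mk, ite_mul, zero_mul]
  rw [sum_dvd_reindex m n hm
    (fun i => y ^ (i / m) / (i / m).factorial * PowerSeries.coeff (R := ℂ) (n - i) F)]
  refine Finset.sum_congr rfl fun p _ => ?_
  rw [Nat.mul_div_cancel_left p hm]

lemma coeff_triple (z y c : ℂ) (r m : ℕ) (hr : 1 ≤ r) (hm : 1 ≤ m) (n : ℕ) :
    PowerSeries.coeff (R := ℂ) n (Zgeo z r * (expMonC y m * expC c))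
      = ∑ p ∈ Finset.range (n / m + 1), ∑ s ∈ Finset.range (n / r + 1),
          if r * s + m * p ≤ n then
            c ^ (n - r * s - m * p) * y ^ p * z ^ s /
              (((n - r * s - m * p).factorial : ℂ) * (p.factorial : ℂ))
          else 0 := by
  rw [coeff_Zgeo_mul z r hr]
  rw [Finset.sum_congr rfl (fun s hs => ?_), Finset.sum_comm]
  have hs' : s ≤ n / r := Nat.lt_succ_iff.mp (Finset.mem_range.mp hs)
  have hrs : r * s ≤ n := by
    rw [mul_comm]; exact (Nat.le_div_iff_mul_le hr).mp hs'
  rw [coeff_expMonC_mul y m hm, Finset.mul_sum]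
  have hset : Finset.range ((n - r * s) / m + 1)
      = Finset.filter (fun p => r * s + m * p ≤ n) (Finset.range (n / m + 1)) := by
    ext p
    simp only [Finset.mem_range, Finset.mem_filter, Nat.lt_succ_iff]
    rw [Nat.le_div_iff_mul_le hm, Nat.le_div_iff_mul_le hm]
    have := mul_comm m p
    omega
  rw [hset, Finset.sum_filter]
  refine Finset.sum_congr rfl fun p _ => ?_
  rw [coeff_expC]
  split_ifs with h
  · ring
  · rfl

lemma triple_comm (f : ℕ → ℕ → ℕ → ℂ) (s1 s2 s3 : Finset ℕ) :
    ∑ j ∈ s1, ∑ p ∈ s2, ∑ s ∈ s3, f j p s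
      = ∑ p ∈ s2, ∑ s ∈ s3, ∑ j ∈ s1, f j p s := by
  rw [Finset.sum_comm]
  exact Finset.sum_congr rfl fun p _ => Finset.sum_comm

lemma cpow_split (a b : ℝ) (ha : 0 < a) (hb : 0 < b) (β : ℂ) :
    β ^ (b : ℂ) = (β / (a : ℂ)) ^ (b : ℂ) * ((a ^ b : ℝ) : ℂ) := by
  have ha0 : (a : ℂ) ≠ 0 := Complex.ofReal_ne_zero.mpr ha.ne'
  rcases eq_or_ne β 0 with rfl | hβ
  · rw [zero_div, Complex.zero_cpow (by exact_mod_cast hb.ne'), zero_mul]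
  · have hβa : β / (a : ℂ) ≠ 0 := div_ne_zero hβ ha0
    rw [Complex.ofReal_cpow ha.le]
    rw [Complex.cpow_def_of_ne_zero hβ, Complex.cpow_def_of_ne_zero hβa,
      Complex.cpow_def_of_ne_zero ha0, ← Complex.exp_add]
    congr 1
    have h : β / (a : ℂ) = ((a⁻¹ : ℝ) : ℂ) * β := by
      push_cast; field_simp
    rw [h, Complex.log_ofReal_mul (by positivity) hβ, Real.log_inv,
      ← Complex.ofReal_log ha.le]
    push_cast
    ring

end Helpers

theorem negative_order_apostol_tegh_array_type
    (a b : ℝ) (ha : 0 < a) (hb : 0 < b) (β : ℂ) (x y z : ℝ)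
    (k α m r : ℕ) (hk : 1 ≤ k) (hα : 1 ≤ α) (hm : 1 ≤ m) (hr : 1 ≤ r)
    (S : ℂ → ℕ → ℕ → ℂ) (Q : ℕ → ℂ)
    (hS : ∀ (X : ℂ) (n ν : ℕ), S X n ν = ((ν.factorial : ℂ))⁻¹ *
      ∑ j ∈ Finset.range (ν + 1), (ν.choose j : ℂ) * (-1) ^ (ν - j) *
        ((β / (a : ℂ)) ^ (b : ℂ)) ^ j * (X + j) ^ n)
    (hQ : (PowerSeries.C (R := ℂ) (β ^ (b : ℂ)) * expC 1 -
          PowerSeries.C (R := ℂ) ((a ^ b : ℝ) : ℂ)) ^ α * (expC (x : ℂ) * expMonC (y : ℂ) m) =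
        PowerSeries.C (R := ℂ) ((((2 : ℝ) ^ ((1 : ℝ) - (k : ℝ)) : ℝ) : ℂ)) ^ α *
          PowerSeries.X ^ (k * α) *
          ((1 - PowerSeries.C (R := ℂ) (z : ℂ) * PowerSeries.X ^ r) *
            PowerSeries.mk (fun n => Q n / n.factorial)))
    (n : ℕ) (hn : k * α ≤ n) :
    Q (n - k * α) =
      ((n - k * α).factorial : ℂ) * (α.factorial : ℂ) * (((a ^ b : ℝ) : ℂ)) ^ α /
          ((((2 : ℝ) ^ ((1 : ℝ) - (k : ℝ)) : ℝ) : ℂ)) ^ α *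
        ∑ p ∈ Finset.range (n / m + 1), ∑ s ∈ Finset.range (n / r + 1),
          if r * s + m * p ≤ n then
            S (x : ℂ) (n - r * s - m * p) α * (y : ℂ) ^ p * (z : ℂ) ^ s /
              ((n - r * s - m * p).factorial * p.factorial)
          else 0 := by
  classical
  set A : ℂ := ((a ^ b : ℝ) : ℂ) with hAdef
  set c2 : ℂ := ((((2 : ℝ) ^ ((1 : ℝ) - (k : ℝ)) : ℝ)) : ℂ) with hc2def
  set lam : ℂ := (β / (a : ℂ)) ^ (b : ℂ) with hlamdef
  have hApos : (0 : ℝ) < a ^ b := Real.rpow_pos_of_pos ha b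
  have hAne : A ≠ 0 := by
    rw [hAdef]; exact_mod_cast hApos.ne'
  have hc2pos : (0 : ℝ) < (2 : ℝ) ^ ((1 : ℝ) - (k : ℝ)) := Real.rpow_pos_of_pos (by norm_num) _
  have hc2ne : c2 ≠ 0 := by
    rw [hc2def]; exact_mod_cast hc2pos.ne'
  have hsplit : β ^ (b : ℂ) = lam * A := cpow_split a b ha hb β
  set M : PowerSeries ℂ := PowerSeries.mk (fun n => Q n / n.factorial) with hMdef
  have hZ := Zgeo_mul (z : ℂ) r hr
  -- key identity with the geometric series multiplied in
  have key : Zgeo (z : ℂ) r *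
      ((PowerSeries.C (R := ℂ) (β ^ (b : ℂ)) * expC 1 - PowerSeries.C (R := ℂ) A) ^ α *
        (expC (x : ℂ) * expMonC (y : ℂ) m))
      = PowerSeries.C (R := ℂ) c2 ^ α * PowerSeries.X ^ (k * α) * M := by
    rw [hQ]
    calc Zgeo (z : ℂ) r * (PowerSeries.C (R := ℂ) c2 ^ α * PowerSeries.X ^ (k * α) *
          ((1 - PowerSeries.C (R := ℂ) (z : ℂ) * PowerSeries.X ^ r) * M))
        = ((1 - PowerSeries.C (R := ℂ) (z : ℂ) * PowerSeries.X ^ r) * Zgeo (z : ℂ) r) *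
            (PowerSeries.C (R := ℂ) c2 ^ α * PowerSeries.X ^ (k * α) * M) := by ring
      _ = PowerSeries.C (R := ℂ) c2 ^ α * PowerSeries.X ^ (k * α) * M := by rw [hZ, one_mul]
  -- expand the binomial power
  have hfac : PowerSeries.C (R := ℂ) (β ^ (b : ℂ)) * expC 1 - PowerSeries.C (R := ℂ) A
      = PowerSeries.C (R := ℂ) A * (PowerSeries.C (R := ℂ) lam * expC 1 - 1) := by
    rw [hsplit, map_mul]
    ring
  have hL : Zgeo (z : ℂ) r *
      ((PowerSeries.C (R := ℂ) (β ^ (b : ℂ)) * expC 1 - PowerSeries.C (R := ℂ) A) ^ α *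
        (expC (x : ℂ) * expMonC (y : ℂ) m))
      = ∑ j ∈ Finset.range (α + 1),
          PowerSeries.C (R := ℂ) (A ^ α * (α.choose j : ℂ) * lam ^ j * (-1) ^ (α - j)) *
            (Zgeo (z : ℂ) r * (expMonC (y : ℂ) m * expC ((x : ℂ) + j))) := by
    rw [hfac, mul_pow, sub_pow, Finset.mul_sum, Finset.sum_mul, Finset.mul_sum]
    refine Finset.sum_congr rfl fun j hj => ?_
    have hj' : j ≤ α := Nat.lt_succ_iff.mp (Finset.mem_range.mp hj)
    have hu : (PowerSeries.C (R := ℂ) lam * expC 1) ^ j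
        = PowerSeries.C (R := ℂ) (lam ^ j) * expC ((j : ℂ)) := by
      rw [mul_pow, expC_pow, mul_one, map_pow]
    have hexp : expC ((j : ℂ)) * expC ((x : ℂ)) = expC ((x : ℂ) + j) := by
      rw [expC_mul, add_comm]
    have hneg1 : (-1 : PowerSeries ℂ) = PowerSeries.C (R := ℂ) (-1) := by simp
    have hsign : ((-1 : PowerSeries ℂ)) ^ (j + α) = PowerSeries.C (R := ℂ) ((-1 : ℂ) ^ (α - j)) := by
      rw [show j + α = (α - j) + 2 * j by omega, pow_add, pow_mul, neg_one_sq, one_pow,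
        mul_one, hneg1, ← map_pow]
    have hch : ((α.choose j : ℕ) : PowerSeries ℂ) = PowerSeries.C (R := ℂ) ((α.choose j : ℂ)) := by
      simp
    rw [one_pow, hu, hsign, hch, ← hexp, map_mul, map_mul, map_mul]
    simp only [map_pow]
    ring
  -- take the n-th coefficient
  have hco := congrArg (PowerSeries.coeff (R := ℂ) n) key
  rw [hL, map_sum] at hco
  simp only [PowerSeries.coeff_C_mul] at hco
  rw [Finset.sum_congr rfl (fun j _ => by
    rw [coeff_triple (z : ℂ) (y : ℂ) ((x : ℂ) + j) r m hr hm n])] at hco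
  have hRco : PowerSeries.coeff (R := ℂ) n (PowerSeries.C (R := ℂ) c2 ^ α * PowerSeries.X ^ (k * α) * M)
      = c2 ^ α * (Q (n - k * α) / ((n - k * α).factorial : ℂ)) := by
    rw [← map_pow, mul_assoc, PowerSeries.coeff_C_mul,
      mul_comm (PowerSeries.X ^ (k * α)) M, PowerSeries.coeff_mul_X_pow', if_pos hn]
    rw [hMdef]
    simp
  rw [hRco] at hco
  -- hco : ∑ j, W j * D j = c2 ^ α * (Q N / N!)
  -- Now rewrite the goal
  simp only [hS]
  have hfacne : ((α.factorial : ℂ)) ≠ 0 := by exact_mod_cast (Nat.factorial_pos α).ne'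
  have hNne : (((n - k * α).factorial : ℂ)) ≠ 0 := by
    exact_mod_cast (Nat.factorial_pos _).ne'
  -- Define the common triple sum
  set U : ℂ := ∑ j ∈ Finset.range (α + 1), ∑ p ∈ Finset.range (n / m + 1),
      ∑ s ∈ Finset.range (n / r + 1),
        if r * s + m * p ≤ n then
          (α.choose j : ℂ) * (-1) ^ (α - j) * lam ^ j *
            ((x : ℂ) + j) ^ (n - r * s - m * p) * (y : ℂ) ^ p * (z : ℂ) ^ s /
            (((n - r * s - m * p).factorial : ℂ) * (p.factorial : ℂ))
        else 0 with hUdef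
  have hmain : A ^ α * U = c2 ^ α * (Q (n - k * α) / ((n - k * α).factorial : ℂ)) := by
    rw [← hco, hUdef, Finset.mul_sum]
    refine Finset.sum_congr rfl fun j _ => ?_
    rw [Finset.mul_sum, Finset.mul_sum]
    refine Finset.sum_congr rfl fun p _ => ?_
    rw [Finset.mul_sum, Finset.mul_sum]
    refine Finset.sum_congr rfl fun s _ => ?_
    split_ifs with h
    · ring
    · simp
  have hrhs : (∑ p ∈ Finset.range (n / m + 1), ∑ s ∈ Finset.range (n / r + 1),
        if r * s + m * p ≤ n then
          (((α.factorial : ℂ))⁻¹ *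
            ∑ j ∈ Finset.range (α + 1), (α.choose j : ℂ) * (-1) ^ (α - j) *
              lam ^ j * ((x : ℂ) + j) ^ (n - r * s - m * p)) * (y : ℂ) ^ p * (z : ℂ) ^ s /
            (((n - r * s - m * p).factorial : ℂ) * (p.factorial : ℂ))
        else 0)
      = ((α.factorial : ℂ))⁻¹ * U := by
    rw [hUdef, triple_comm, Finset.mul_sum]
    refine Finset.sum_congr rfl fun p _ => ?_
    rw [Finset.mul_sum]
    refine Finset.sum_congr rfl fun s _ => ?_
    rw [Finset.sum_ite_irrel, Finset.sum_const_zero]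
    split_ifs with h
    · rw [Finset.mul_sum, Finset.sum_mul, Finset.sum_mul, Finset.sum_div, Finset.mul_sum]
      exact Finset.sum_congr rfl fun j _ => by ring
    · simp
  rw [hrhs]
  have hQval : Q (n - k * α)
      = ((n - k * α).factorial : ℂ) * A ^ α * U / c2 ^ α := by
    have hmain' : A ^ α * U * ((n - k * α).factorial : ℂ) = c2 ^ α * Q (n - k * α) := by
      rw [hmain]; field_simp
    rw [eq_div_iff (pow_ne_zero α hc2ne)]
    linear_combination -hmain'
  rw [hQval]
  field_simp
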